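/- Let X be a finite set of points in ℝ^d and let T be a max-sum tree of X, i.e., a tree with vertex set X that maximizes the cost (the sum of Euclidean distances between pairs of vertices joined by an edge) among all trees with vertex set X. Then T is a Tverberg graph: the closed balls B(xy) over all edges xy of T have a common point. -/

import Mathlib

open Finset

/-- The cost of a graph whose vertices are (labelled by) points in `ℝ^d`:
the sum of Euclidean distances between the pairs of vertices joined by an edge. -/
noncomputable def graphCost {d : ℕ} {V : Type} [Fintype V]
    (p : V → EuclideanSpace ℝ (Fin d)) (G : SimpleGraph V) : ℝ :=
  ∑ e ∈ (Set.toFinite G.edgeSet).toFinset,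
    Sym2.lift ⟨fun x y => dist (p x) (p y), fun _ _ => dist_comm _ _⟩ e

section Geometry
variable {E : Type*} [NormedAddCommGroup E] [InnerProductSpace ℝ E]

lemma tv_dist_midpoint_le_of_inner_nonpos {z x y : E}
    (h : (inner ℝ (x - z) (y - z) : ℝ) ≤ 0) :
    dist z (midpoint ℝ x y) ≤ dist x y / 2 := by
  have hm : z - midpoint ℝ x y = (2⁻¹ : ℝ) • ((z - x) + (z - y)) := by
    rw [midpoint_eq_smul_add, invOf_eq_inv]
    module
  have h1 : dist z (midpoint ℝ x y) = ‖(z - x) + (z - y)‖ / 2 := by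
    rw [dist_eq_norm, hm, norm_smul]
    simp [div_eq_inv_mul]
  have h2 : dist x y = ‖(z - y) - (z - x)‖ := by
    rw [dist_eq_norm]
    congr 1
    abel
  have hi : (inner ℝ (z - x) (z - y) : ℝ) ≤ 0 := by
    have : (inner ℝ (z - x) (z - y) : ℝ) = (inner ℝ (x - z) (y - z) : ℝ) := by
      rw [show z - x = -(x - z) by abel, show z - y = -(y - z) by abel, inner_neg_neg]
    linarith [this ▸ h]
  have hsq : ‖(z - x) + (z - y)‖ ≤ ‖(z - y) - (z - x)‖ := by
    have e1 := norm_add_sq_real (z - x) (z - y)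
    have e2 := norm_sub_sq_real (z - y) (z - x)
    have := real_inner_comm (z - x) (z - y)
    nlinarith [norm_nonneg ((z - x) + (z - y)), norm_nonneg ((z - y) - (z - x))]
  rw [h1, h2]
  linarith

end Geometry

section Geometry2
variable {E : Type*} [NormedAddCommGroup E] [InnerProductSpace ℝ E]

lemma tv_inner_nonpos_of_partition [DecidableEq E] {A B : Finset E} {u v z : E} {R : ℝ}
    (hu : u ∈ A) (hv : v ∈ B)
    (hR : ∀ w ∈ A ∪ B, dist z w ≤ R)
    (hz : z ∈ convexHull ℝ {w : E | w ∈ A ∪ B ∧ dist z w = R})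
    (hd : ∀ p ∈ A, ∀ q ∈ B, dist p q ≤ dist u v) :
    (inner ℝ (u - z) (v - z) : ℝ) ≤ 0 := by
  classical
  by_contra hγ
  push_neg at hγ
  set γ : ℝ := (inner ℝ (u - z) (v - z) : ℝ) with hγdef
  -- the support finset
  set supp : Finset E := (A ∪ B).filter (fun w => dist z w = R) with hsupp
  have hset : {w : E | w ∈ A ∪ B ∧ dist z w = R} = (supp : Set E) := by
    ext w; simp [hsupp]
  rw [hset, Finset.convexHull_eq] at hz
  obtain ⟨w, hw0, hw1, hcm⟩ := hz
  rw [Finset.centerMass_eq_of_sum_1 _ id hw1] at hcm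
  simp only [id] at hcm
  -- basic facts
  have huR : ‖u - z‖ ≤ R := by
    have := hR u (Finset.mem_union_left _ hu)
    rwa [dist_eq_norm, norm_sub_rev] at this
  have hvR : ‖v - z‖ ≤ R := by
    have := hR v (Finset.mem_union_right _ hv)
    rwa [dist_eq_norm, norm_sub_rev] at this
  have hsuppR : ∀ p ∈ supp, ‖p - z‖ = R := by
    intro p hp
    rw [hsupp, Finset.mem_filter] at hp
    rw [← hp.2, dist_eq_norm, norm_sub_rev]
  have huv : ‖u - v‖ = dist u v := (dist_eq_norm u v).symm
  have huvexp : ‖u - v‖ ^ 2 = ‖u - z‖ ^ 2 + ‖v - z‖ ^ 2 - 2 * γ := by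
    have : u - v = (u - z) - (v - z) := by abel
    rw [this, norm_sub_sq_real]; ring
  -- key inequality 1 : p ∈ A with ‖p-z‖ = R pairs with v
  have key1 : ∀ p ∈ supp, p ∈ A → γ ≤ (inner ℝ (p - z) (v - z) : ℝ) := by
    intro p hps hpA
    have hdpv : ‖p - v‖ ≤ ‖u - v‖ := by
      rw [huv, ← dist_eq_norm]; exact hd p hpA v hv
    have hpz := hsuppR p hps
    have hexp : ‖p - v‖ ^ 2 = ‖p - z‖ ^ 2 + ‖v - z‖ ^ 2
        - 2 * (inner ℝ (p - z) (v - z) : ℝ) := by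
      have : p - v = (p - z) - (v - z) := by abel
      rw [this, norm_sub_sq_real]; ring
    have hsq : ‖p - v‖ ^ 2 ≤ ‖u - v‖ ^ 2 := by
      have h0 : (0:ℝ) ≤ ‖p - v‖ := norm_nonneg _
      nlinarith [norm_nonneg (u - v)]
    have hpz2 : ‖p - z‖ ^ 2 = R ^ 2 := by rw [hpz]
    have hu2 : ‖u - z‖ ^ 2 ≤ R ^ 2 := pow_le_pow_left₀ (norm_nonneg _) huR 2
    linarith [hexp, hsq, huvexp]
  -- key inequality 2 : q ∈ B with ‖q-z‖ = R pairs with u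
  have key2 : ∀ q ∈ supp, q ∈ B → γ ≤ (inner ℝ (q - z) (u - z) : ℝ) := by
    intro q hqs hqB
    have hdq : ‖u - q‖ ≤ ‖u - v‖ := by
      rw [huv, ← dist_eq_norm]; exact hd u hu q hqB
    have hqz := hsuppR q hqs
    have hexp : ‖u - q‖ ^ 2 = ‖q - z‖ ^ 2 + ‖u - z‖ ^ 2
        - 2 * (inner ℝ (q - z) (u - z) : ℝ) := by
      have : u - q = (u - z) - (q - z) := by abel
      rw [this, norm_sub_sq_real]
      have := real_inner_comm (u - z) (q - z)
      rw [this]; ring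
    have hsq : ‖u - q‖ ^ 2 ≤ ‖u - v‖ ^ 2 := by
      nlinarith [norm_nonneg (u - q), norm_nonneg (u - v)]
    have hqz2 : ‖q - z‖ ^ 2 = R ^ 2 := by rw [hqz]
    have hv2 : ‖v - z‖ ^ 2 ≤ R ^ 2 := pow_le_pow_left₀ (norm_nonneg _) hvR 2
    linarith [hexp, hsq, huvexp]
  -- key inequality 3 : cross pairs
  have key3 : ∀ p ∈ supp, p ∈ A → ∀ q ∈ supp, q ∈ B →
      γ ≤ (inner ℝ (p - z) (q - z) : ℝ) := by
    intro p hps hpA q hqs hqB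
    have hdpq : ‖p - q‖ ≤ ‖u - v‖ := by
      rw [huv, ← dist_eq_norm]; exact hd p hpA q hqB
    have hpz := hsuppR p hps
    have hqz := hsuppR q hqs
    have hexp : ‖p - q‖ ^ 2 = ‖p - z‖ ^ 2 + ‖q - z‖ ^ 2
        - 2 * (inner ℝ (p - z) (q - z) : ℝ) := by
      have : p - q = (p - z) - (q - z) := by abel
      rw [this, norm_sub_sq_real]; ring
    have hsq : ‖p - q‖ ^ 2 ≤ ‖u - v‖ ^ 2 := by
      nlinarith [norm_nonneg (p - q), norm_nonneg (u - v)]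
    have hpz2 : ‖p - z‖ ^ 2 = R ^ 2 := by rw [hpz]
    have hqz2 : ‖q - z‖ ^ 2 = R ^ 2 := by rw [hqz]
    have hu2 : ‖u - z‖ ^ 2 ≤ R ^ 2 := pow_le_pow_left₀ (norm_nonneg _) huR 2
    have hv2 : ‖v - z‖ ^ 2 ≤ R ^ 2 := pow_le_pow_left₀ (norm_nonneg _) hvR 2
    linarith [hexp, hsq, huvexp]
  -- split the support
  set sA : Finset E := supp.filter (fun p => p ∈ A) with hsA
  set sB : Finset E := supp.filter (fun p => ¬ p ∈ A) with hsB
  have hsBmem : ∀ q ∈ sB, q ∈ supp ∧ q ∈ B := by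
    intro q hq
    rw [hsB, Finset.mem_filter] at hq
    refine ⟨hq.1, ?_⟩
    have : q ∈ A ∪ B := (Finset.mem_filter.mp hq.1).1
    rcases Finset.mem_union.mp this with h | h
    · exact absurd h hq.2
    · exact h
  have hsAmem : ∀ p ∈ sA, p ∈ supp ∧ p ∈ A := by
    intro p hp
    rw [hsA, Finset.mem_filter] at hp
    exact ⟨hp.1, hp.2⟩
  set SA : E := ∑ p ∈ sA, w p • (p - z) with hSA
  set SB : E := ∑ q ∈ sB, w q • (q - z) with hSB
  have hsum0 : SA + SB = 0 := by
    rw [hSA, hSB, hsA, hsB, Finset.sum_filter_add_sum_filter_not]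
    have : ∑ p ∈ supp, w p • (p - z) = (∑ p ∈ supp, w p • p) - (∑ p ∈ supp, w p) • z := by
      rw [Finset.sum_smul]
      rw [← Finset.sum_sub_distrib]
      congr 1; ext p; rw [smul_sub]
    rw [this, hcm, hw1, one_smul, sub_self]
  set α : ℝ := ∑ p ∈ sA, w p with hα
  set β : ℝ := ∑ q ∈ sB, w q with hβ
  have hαβ : α + β = 1 := by
    rw [hα, hβ, hsA, hsB, Finset.sum_filter_add_sum_filter_not, hw1]
  have hα0 : 0 ≤ α := Finset.sum_nonneg fun p hp => hw0 p (hsAmem p hp).1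
  have hβ0 : 0 ≤ β := Finset.sum_nonneg fun q hq => hw0 q (hsBmem q hq).1
  -- inner product of the two partial sums
  have hinnerAB : α * β * γ ≤ (inner ℝ SA SB : ℝ) := by
    rw [hSA, hSB, sum_inner]
    have step : ∀ p ∈ sA, w p * (β * γ) ≤ (inner ℝ (w p • (p - z)) SB : ℝ) := by
      intro p hp
      rw [real_inner_smul_left, hSB, inner_sum]
      have : ∀ q ∈ sB, w q * γ ≤ (inner ℝ (p - z) (w q • (q - z)) : ℝ) := by
        intro q hq
        rw [real_inner_smul_right]
        have h3 := key3 p (hsAmem p hp).1 (hsAmem p hp).2 q (hsBmem q hq).1 (hsBmem q hq).2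
        exact mul_le_mul_of_nonneg_left h3 (hw0 q (hsBmem q hq).1)
      have hsumle : β * γ ≤ ∑ q ∈ sB, (inner ℝ (p - z) (w q • (q - z)) : ℝ) := by
        have := Finset.sum_le_sum this
        rwa [← Finset.sum_mul, ← hβ] at this
      exact mul_le_mul_of_nonneg_left hsumle (hw0 p (hsAmem p hp).1)
    have := Finset.sum_le_sum step
    calc α * β * γ = ∑ p ∈ sA, w p * (β * γ) := by rw [← Finset.sum_mul, ← hα]; ring
    _ ≤ _ := this
  have hABneg : (inner ℝ SA SB : ℝ) ≤ 0 := by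
    have h0 : ‖SA + SB‖ ^ 2 = 0 := by rw [hsum0]; simp
    rw [norm_add_sq_real] at h0
    nlinarith [norm_nonneg SA, norm_nonneg SB, sq_nonneg ‖SA‖, sq_nonneg ‖SB‖]
  have hαβ0 : α = 0 ∨ β = 0 := by
    have : α * β * γ ≤ 0 := le_trans hinnerAB hABneg
    rcases mul_nonneg hα0 hβ0 |>.lt_or_eq with h | h
    · exfalso; nlinarith
    · exact mul_eq_zero.mp h.symm
  -- helper: lower bound of inner of weighted sum against a fixed vector
  have pair : ∀ (s : Finset E) (hs : ∀ q ∈ s, q ∈ supp) (x : E),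
      (∀ q ∈ s, γ ≤ (inner ℝ (q - z) x : ℝ)) →
      (∑ q ∈ s, w q) * γ ≤ (inner ℝ (∑ q ∈ s, w q • (q - z)) x : ℝ) := by
    intro s hs x hx
    rw [sum_inner, Finset.sum_mul]
    apply Finset.sum_le_sum
    intro q hq
    rw [real_inner_smul_left]
    exact mul_le_mul_of_nonneg_left (hx q hq) (hw0 q (hs q hq))
  rcases hαβ0 with h0 | h0
  · -- α = 0 : all the weight is on the B side
    have hwA : ∀ p ∈ sA, w p = 0 :=
      (Finset.sum_eq_zero_iff_of_nonneg
        (fun p hp => hw0 p (hsAmem p hp).1)).mp (by rw [← hα, h0])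
    have hSA0 : SA = 0 := by
      rw [hSA]; apply Finset.sum_eq_zero; intro p hp; rw [hwA p hp, zero_smul]
    have hSB0 : SB = 0 := by have := hsum0; rw [hSA0, zero_add] at this; exact this
    have hβ1 : β = 1 := by linarith
    have hlow : β * γ ≤ (inner ℝ SB (u - z) : ℝ) := by
      rw [hSB, hβ]
      exact pair sB (fun q hq => (hsBmem q hq).1) (u - z)
        (fun q hq => key2 q (hsBmem q hq).1 (hsBmem q hq).2)
    rw [hSB0] at hlow
    simp only [inner_zero_left] at hlow
    rw [hβ1, one_mul] at hlow
    exact absurd hlow (not_le.mpr hγ)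
  · -- β = 0 : all the weight is on the A side
    have hwB : ∀ q ∈ sB, w q = 0 :=
      (Finset.sum_eq_zero_iff_of_nonneg
        (fun q hq => hw0 q (hsBmem q hq).1)).mp (by rw [← hβ, h0])
    have hSB0 : SB = 0 := by
      rw [hSB]; apply Finset.sum_eq_zero; intro q hq; rw [hwB q hq, zero_smul]
    have hSA0 : SA = 0 := by have := hsum0; rw [hSB0, add_zero] at this; exact this
    have hα1 : α = 1 := by linarith
    have hlow : α * γ ≤ (inner ℝ SA (v - z) : ℝ) := by
      rw [hSA, hα]
      exact pair sA (fun p hp => (hsAmem p hp).1) (v - z)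
        (fun p hp => key1 p (hsAmem p hp).1 (hsAmem p hp).2)
    rw [hSA0] at hlow
    simp only [inner_zero_left] at hlow
    rw [hα1, one_mul] at hlow
    exact absurd hlow (not_le.mpr hγ)

end Geometry2

section Center
variable {E : Type*} [NormedAddCommGroup E] [InnerProductSpace ℝ E] [FiniteDimensional ℝ E]

lemma tv_exists_center (s : Finset E) (hs : s.Nonempty) :
    ∃ (z : E) (R : ℝ), (∀ w ∈ s, dist z w ≤ R) ∧
      z ∈ convexHull ℝ {w : E | w ∈ s ∧ dist z w = R} := by
  classical
  obtain ⟨w₀, hw₀⟩ := id hs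
  set F : E → ℝ := fun z => s.sup' hs (fun w => dist z w) with hF
  have hFle : ∀ z w, w ∈ s → dist z w ≤ F z := fun z w hw => Finset.le_sup' _ hw
  have hFattain : ∀ z, ∃ w ∈ s, F z = dist z w := by
    intro z
    obtain ⟨w, hw, he⟩ := s.exists_mem_eq_sup' hs (fun w => dist z w)
    exact ⟨w, hw, he⟩
  have hFlip : ∀ z y : E, F z ≤ F y + dist z y := by
    intro z y
    apply Finset.sup'_le
    intro w hw
    calc dist z w ≤ dist z y + dist y w := dist_triangle _ _ _
    _ ≤ dist z y + F y := by linarith [hFle y w hw]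
    _ = F y + dist z y := by ring
  have hFcont : Continuous F := by
    apply LipschitzWith.continuous (K := 1)
    apply LipschitzWith.of_dist_le_mul
    intro a b
    simp only [NNReal.coe_one, one_mul, Real.dist_eq, abs_le]
    constructor
    · linarith [hFlip b a, dist_comm a b]
    · linarith [hFlip a b]
  -- minimize over a closed ball
  have hcpt : IsCompact (Metric.closedBall w₀ (F w₀)) := isCompact_closedBall _ _
  have hne : (Metric.closedBall w₀ (F w₀)).Nonempty := by
    refine ⟨w₀, ?_⟩
    simp only [Metric.mem_closedBall, dist_self]
    exact le_trans dist_nonneg (hFle w₀ w₀ hw₀)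
  obtain ⟨z, hzmem, hzmin⟩ := hcpt.exists_isMinOn hne hFcont.continuousOn
  have hglobal : ∀ y : E, F z ≤ F y := by
    intro y
    by_cases hy : y ∈ Metric.closedBall w₀ (F w₀)
    · exact hzmin hy
    · have h1 : F w₀ < dist y w₀ := by
        simp only [Metric.mem_closedBall, not_le] at hy
        linarith [dist_comm y w₀ ▸ hy]
      have h2 : dist y w₀ ≤ F y := hFle y w₀ hw₀
      have h3 : F z ≤ F w₀ := hzmin (by
        simp only [Metric.mem_closedBall, dist_self]
        exact le_trans dist_nonneg (hFle w₀ w₀ hw₀))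
      linarith
  refine ⟨z, F z, fun w hw => hFle z w hw, ?_⟩
  -- support points
  by_contra hhull
  set R := F z with hR
  set suppS : Set E := {w : E | w ∈ s ∧ dist z w = R} with hsuppS
  have hsuppfin : suppS.Finite := Set.Finite.subset s.finite_toSet (fun w hw => hw.1)
  have hclosed : IsClosed (convexHull ℝ suppS) := hsuppfin.isClosed_convexHull (𝕜 := ℝ)
  have hconv : Convex ℝ (convexHull ℝ suppS) := convex_convexHull _ _
  obtain ⟨f, c, hfc, hfb⟩ := geometric_hahn_banach_closed_point hconv hclosed hhull
  -- translate to an inner product direction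
  set v : E := (InnerProductSpace.toDual ℝ E).symm f with hv
  have hfv : ∀ x : E, f x = (inner ℝ v x : ℝ) := by
    intro x
    rw [hv]
    simp [InnerProductSpace.toDual_symm_apply]
  -- the support is nonempty
  obtain ⟨wm, hwm, hwme⟩ := hFattain z
  have hwmsupp : wm ∈ suppS := ⟨hwm, hwme.symm⟩
  -- gap
  set c' : ℝ := f z - c with hc'
  have hc'pos : 0 < c' := by
    have h1 := hfc wm (subset_convexHull ℝ _ hwmsupp)
    have h2 := hfb
    rw [hc']; linarith
  have hvz : ∀ x, x ∈ suppS → c' < (inner ℝ v (z - x) : ℝ) := by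
    intro x hx
    have h1 := hfc x (subset_convexHull ℝ _ hx)
    have : (inner ℝ v (z - x) : ℝ) = f z - f x := by
      rw [inner_sub_right, hfv z, hfv x]
    rw [this, hc']; linarith [h1]
  have hvne : v ≠ 0 := by
    intro h0
    have := hvz wm hwmsupp
    rw [h0] at this
    simp only [inner_zero_left] at this
    linarith
  have hvnorm : 0 < ‖v‖ := norm_pos_iff.mpr hvne
  -- choose ε
  set h : E → ℝ := fun w' => if dist z w' = R then c' / ‖v‖ ^ 2 else (R - dist z w') / ‖v‖
    with hh
  have hhpos : ∀ w' ∈ s, 0 < h w' := by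
    intro w' hw'
    simp only [hh]
    split_ifs with hcase
    · positivity
    · have h1 : dist z w' < R := lt_of_le_of_ne (hFle z w' hw') hcase
      have h2 : 0 < R - dist z w' := by linarith
      positivity
  set ε : ℝ := (s.inf' hs h) / 2 with hε
  have hεpos : 0 < ε := by
    rw [hε]
    have : 0 < s.inf' hs h := by
      rw [Finset.lt_inf'_iff]
      exact fun w' hw' => hhpos w' hw'
    linarith
  have hεle : ∀ w' ∈ s, ε ≤ h w' / 2 := by
    intro w' hw'
    rw [hε]
    have := Finset.inf'_le h hw'
    linarith
  -- the perturbed point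
  set z' : E := z - ε • v with hz'
  have hdecr : ∀ w' ∈ s, dist z' w' < R := by
    intro w' hw'
    by_cases hcase : dist z w' = R
    · -- support point : squared distance strictly decreases
      have hεb : ε ≤ c' / ‖v‖ ^ 2 / 2 := by
        have h5 := hεle w' hw'
        simp only [hh] at h5
        rw [if_pos hcase] at h5
        linarith
      have hiv : c' < (inner ℝ v (z - w') : ℝ) := hvz w' ⟨hw', hcase⟩
      have hexp : dist z' w' ^ 2
          = dist z w' ^ 2 - 2 * ε * (inner ℝ v (z - w') : ℝ) + ε ^ 2 * ‖v‖ ^ 2 := by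
        rw [hz', dist_eq_norm, dist_eq_norm]
        have : z - ε • v - w' = (z - w') - ε • v := by abel
        rw [this, norm_sub_sq_real, real_inner_smul_right, norm_smul]
        simp only [Real.norm_eq_abs, abs_of_pos hεpos]
        rw [real_inner_comm]
        ring
      have hlt : dist z' w' ^ 2 < R ^ 2 := by
        rw [hexp, hcase]
        have h1 : ε * ‖v‖ ^ 2 ≤ c' / 2 := by
          have h2 : ε ≤ c' / ‖v‖ ^ 2 / 2 := hεb
          have h3 : 0 < ‖v‖ ^ 2 := by positivity
          calc ε * ‖v‖ ^ 2 ≤ (c' / ‖v‖ ^ 2 / 2) * ‖v‖ ^ 2 :=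
            mul_le_mul_of_nonneg_right h2 (le_of_lt h3)
          _ = c' / 2 := by
            have h4 : ‖v‖ ≠ 0 := ne_of_gt hvnorm
            field_simp
        nlinarith [hεpos, hiv]
      have hd0 : 0 ≤ dist z' w' := dist_nonneg
      have hR0 : 0 ≤ R := hcase ▸ dist_nonneg
      nlinarith
    · -- non-support point : small translation keeps it inside
      have hwR : dist z w' < R := lt_of_le_of_ne (hFle z w' hw') hcase
      have hεb : ε ≤ (R - dist z w') / ‖v‖ / 2 := by
        have h5 := hεle w' hw'
        simp only [hh] at h5
        rw [if_neg hcase] at h5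
        linarith
      have hmove : dist z' z = ε * ‖v‖ := by
        rw [hz', dist_eq_norm]
        have : z - ε • v - z = -(ε • v) := by abel
        rw [this, norm_neg, norm_smul]
        simp [abs_of_pos hεpos]
      have : dist z' w' ≤ dist z' z + dist z w' := dist_triangle _ _ _
      have hmb : ε * ‖v‖ ≤ (R - dist z w') / 2 := by
        have h3 : 0 < ‖v‖ := hvnorm
        calc ε * ‖v‖ ≤ ((R - dist z w') / ‖v‖ / 2) * ‖v‖ :=
          mul_le_mul_of_nonneg_right hεb (le_of_lt h3)
        _ = (R - dist z w') / 2 := by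
          have h4 : ‖v‖ ≠ 0 := ne_of_gt hvnorm
          field_simp
      linarith [hmove ▸ hmb]
  -- contradiction with minimality
  obtain ⟨wz, hwz, hwze⟩ := hFattain z'
  have : F z' < R := by rw [hwze]; exact hdecr wz hwz
  have h9 := hglobal z'
  linarith

end Center

section Graph
open SimpleGraph
variable {V : Type} [Fintype V]

/-- After deleting one edge of a connected graph, every vertex can still reach
one of the two endpoints. -/
lemma tv_cover {T : SimpleGraph V} (hconn : T.Connected) {u v : V} (w : V) :
    (T.deleteEdges {s(u,v)}).Reachable w u ∨ (T.deleteEdges {s(u,v)}).Reachable w v := by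
  have aux : ∀ (a b : V) (p : T.Walk a b),
      ((T.deleteEdges {s(u,v)}).Reachable b u ∨ (T.deleteEdges {s(u,v)}).Reachable b v) →
      ((T.deleteEdges {s(u,v)}).Reachable a u ∨ (T.deleteEdges {s(u,v)}).Reachable a v) := by
    intro a b p
    induction p with
    | nil => exact id
    | cons h p ih =>
      intro hb
      rename_i x y _
      by_cases he : s(x, y) = s(u, v)
      · rw [Sym2.eq_iff] at he
        rcases he with ⟨rfl, rfl⟩ | ⟨rfl, rfl⟩
        · exact Or.inl (Reachable.refl _)
        · exact Or.inr (Reachable.refl _)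
      · have hadj : (T.deleteEdges {s(u,v)}).Adj x y := by
          rw [deleteEdges_adj]
          exact ⟨h, by simpa using he⟩
        rcases ih hb with h1 | h1
        · exact Or.inl (hadj.reachable.trans h1)
        · exact Or.inr (hadj.reachable.trans h1)
  obtain ⟨p⟩ := hconn w u
  exact aux w u p (Or.inl (Reachable.refl _))

/-- In a tree, the two endpoints of an edge are separated by deleting it. -/
lemma tv_sep {T : SimpleGraph V} (hT : T.IsTree) {u v : V} (huv : T.Adj u v) :
    ¬ (T.deleteEdges {s(u,v)}).Reachable u v := by
  have hb : T.IsBridge s(u, v) :=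
    (isAcyclic_iff_forall_adj_isBridge.mp hT.IsAcyclic) huv
  rw [isBridge_iff] at hb
  exact hb

/-- The exchanged graph is a tree. -/
lemma tv_exchange_isTree {T : SimpleGraph V} (hT : T.IsTree) {u v p q : V}
    (huv : T.Adj u v)
    (hp : (T.deleteEdges {s(u,v)}).Reachable p u)
    (hq : (T.deleteEdges {s(u,v)}).Reachable q v)
    (hpq : p ≠ q) :
    (T.deleteEdges {s(u,v)} ⊔ fromEdgeSet {s(p,q)}).IsTree := by
  set G : SimpleGraph V := T.deleteEdges {s(u,v)} with hG
  set T' : SimpleGraph V := G ⊔ fromEdgeSet {s(p,q)} with hT'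
  have hGle : G ≤ T' := le_sup_left
  have hGT : G ≤ T := by
    intro a b hab
    rw [hG, deleteEdges_adj] at hab
    exact hab.1
  have hsep : ¬ G.Reachable u v := tv_sep hT huv
  have hadjpq : T'.Adj p q := by
    rw [hT', sup_adj, fromEdgeSet_adj]
    exact Or.inr ⟨rfl, hpq⟩
  constructor
  · -- connectivity
    have hreach : ∀ w : V, T'.Reachable w u := by
      intro w
      rcases tv_cover hT.isConnected w (u := u) (v := v) with h1 | h1
      · exact h1.mono hGle
      · refine (h1.mono hGle).trans ?_
        exact ((hq.mono hGle).symm.trans (hadjpq.symm.reachable)).trans (hp.mono hGle)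
    have : Nonempty V := ⟨u⟩
    exact ⟨fun a b => (hreach a).trans (hreach b).symm⟩
  · -- acyclicity
    intro x c hc
    by_cases hf : s(p, q) ∈ c.edges
    · have hcand : T'.Adj p q ∧ (T' \ fromEdgeSet {s(p,q)}).Reachable p q :=
        adj_and_reachable_delete_edges_iff_exists_cycle.mpr ⟨x, c, hc, hf⟩
      have hle : T' \ fromEdgeSet {s(p,q)} ≤ G := by
        intro a b hab
        rw [sdiff_adj] at hab
        rcases (sup_adj _ _ _ _).mp hab.1 with h1 | h1
        · exact h1
        · exact absurd h1 hab.2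
      have : G.Reachable p q := hcand.2.mono hle
      exact hsep ((hp.symm.trans this).trans hq)
    · -- cycle avoiding the new edge lives in T
      have hedges : ∀ e ∈ c.edges, e ∈ T.edgeSet := by
        intro e he
        have h1 := c.edges_subset_edgeSet he
        rw [hT', edgeSet_sup, hG, edgeSet_deleteEdges, edgeSet_fromEdgeSet] at h1
        rcases h1 with h1 | h1
        · exact h1.1
        · exfalso
          have : e = s(p,q) := h1.1
          exact hf (this ▸ he)
      exact hT.IsAcyclic (c.transfer T hedges) (hc.transfer hedges)

end Graph

section Cost
open SimpleGraph
variable {d : ℕ} {V : Type} [Fintype V]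

lemma tv_cost_exchange (pt : V → EuclideanSpace ℝ (Fin d)) {T : SimpleGraph V}
    {u v p q : V} (huv : T.Adj u v) (hnadj : ¬ T.Adj p q) (hpq : p ≠ q) :
    graphCost pt (T.deleteEdges {s(u,v)} ⊔ fromEdgeSet {s(p,q)})
      = graphCost pt T - dist (pt u) (pt v) + dist (pt p) (pt q) := by
  classical
  set g : Sym2 V → ℝ := Sym2.lift ⟨fun x y => dist (pt x) (pt y), fun _ _ => dist_comm _ _⟩
    with hg
  set T' : SimpleGraph V := T.deleteEdges {s(u,v)} ⊔ fromEdgeSet {s(p,q)} with hT'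
  have hmemT : s(u,v) ∈ (Set.toFinite T.edgeSet).toFinset := by
    rw [Set.Finite.mem_toFinset, mem_edgeSet]; exact huv
  have hnmem : s(p,q) ∉ (Set.toFinite T.edgeSet).toFinset := by
    rw [Set.Finite.mem_toFinset, mem_edgeSet]; exact hnadj
  have hne : s(p,q) ≠ s(u,v) := by
    intro h
    rw [Sym2.eq_iff] at h
    rcases h with ⟨rfl, rfl⟩ | ⟨rfl, rfl⟩
    · exact hnadj huv
    · exact hnadj huv.symm
  have hset : (Set.toFinite T'.edgeSet).toFinset
      = insert (s(p,q)) (((Set.toFinite T.edgeSet).toFinset).erase (s(u,v))) := by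
    ext e
    rw [Set.Finite.mem_toFinset, Finset.mem_insert, Finset.mem_erase,
      Set.Finite.mem_toFinset]
    rw [hT', edgeSet_sup, edgeSet_deleteEdges, edgeSet_fromEdgeSet]
    constructor
    · rintro (⟨h1, h2⟩ | ⟨h1, _⟩)
      · exact Or.inr ⟨by simpa using h2, h1⟩
      · exact Or.inl h1
    · rintro (rfl | ⟨h1, h2⟩)
      · right
        refine ⟨rfl, ?_⟩
        simp only [Set.mem_setOf_eq, Sym2.mem_diagSet, Sym2.isDiag_iff_proj_eq]
        exact hpq
      · exact Or.inl ⟨h2, by simpa using h1⟩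
  rw [graphCost, graphCost, hset]
  rw [Finset.sum_insert (fun hmem => hnmem (Finset.mem_of_mem_erase hmem))]
  rw [Finset.sum_erase_eq_sub hmemT]
  have h1 : g s(p,q) = dist (pt p) (pt q) := by simp [hg]
  have h2 : g s(u,v) = dist (pt u) (pt v) := by simp [hg]
  rw [← hg]
  rw [h1, h2]
  ring

end Cost


/-- A max-sum tree of any finite point set in `ℝ^d` is a Tverberg graph: the closed
balls with diameters induced by its edges have a common point. -/
theorem maxSumTree_isTverberg {d : ℕ} (X : Finset (EuclideanSpace ℝ (Fin d)))
    (T : SimpleGraph {x // x ∈ X}) (hT : T.IsTree)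
    (hmax : ∀ T' : SimpleGraph {x // x ∈ X}, T'.IsTree →
      graphCost (Subtype.val) T' ≤
        graphCost (Subtype.val) T) :
    ∃ z : EuclideanSpace ℝ (Fin d), ∀ x y : {x // x ∈ X}, T.Adj x y →
      dist z (midpoint ℝ (x : EuclideanSpace ℝ (Fin d)) (y : EuclideanSpace ℝ (Fin d))) ≤
        dist (x : EuclideanSpace ℝ (Fin d)) (y : EuclideanSpace ℝ (Fin d)) / 2 := by
  classical
  have hne : X.Nonempty := by
    have h1 : Nonempty {x // x ∈ X} := hT.isConnected.nonempty
    obtain ⟨⟨x, hx⟩⟩ := h1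
    exact ⟨x, hx⟩
  obtain ⟨z, R, hR, hz⟩ := tv_exists_center X hne
  refine ⟨z, ?_⟩
  intro x y hxy
  set G : SimpleGraph {x // x ∈ X} := T.deleteEdges {s(x,y)} with hG
  have hsep : ¬ G.Reachable x y := tv_sep hT hxy
  set A : Finset (EuclideanSpace ℝ (Fin d)) :=
    (X.attach.filter (fun w => G.Reachable w x)).image Subtype.val with hA
  set B : Finset (EuclideanSpace ℝ (Fin d)) :=
    (X.attach.filter (fun w => ¬ G.Reachable w x)).image Subtype.val with hB
  have hU : A ∪ B = X := by
    ext w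
    constructor
    · intro hw
      rcases Finset.mem_union.mp hw with h | h
      · obtain ⟨a, _, rfl⟩ := Finset.mem_image.mp h
        exact a.2
      · obtain ⟨a, _, rfl⟩ := Finset.mem_image.mp h
        exact a.2
    · intro hw
      by_cases hr : G.Reachable ⟨w, hw⟩ x
      · exact Finset.mem_union_left _ (Finset.mem_image.mpr
          ⟨⟨w, hw⟩, Finset.mem_filter.mpr ⟨Finset.mem_attach _ _, hr⟩, rfl⟩)
      · exact Finset.mem_union_right _ (Finset.mem_image.mpr
          ⟨⟨w, hw⟩, Finset.mem_filter.mpr ⟨Finset.mem_attach _ _, hr⟩, rfl⟩)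
  have hu : (x : EuclideanSpace ℝ (Fin d)) ∈ A :=
    Finset.mem_image.mpr ⟨x, Finset.mem_filter.mpr ⟨Finset.mem_attach _ _,
      SimpleGraph.Reachable.refl _⟩, rfl⟩
  have hv : (y : EuclideanSpace ℝ (Fin d)) ∈ B :=
    Finset.mem_image.mpr ⟨y, Finset.mem_filter.mpr ⟨Finset.mem_attach _ _,
      fun h => hsep h.symm⟩, rfl⟩
  -- the exchange bound
  have hd : ∀ p' ∈ A, ∀ q' ∈ B, dist p' q' ≤
      dist (x : EuclideanSpace ℝ (Fin d)) (y : EuclideanSpace ℝ (Fin d)) := by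
    intro p' hp' q' hq'
    obtain ⟨p, hpf, rfl⟩ := Finset.mem_image.mp hp'
    obtain ⟨q, hqf, rfl⟩ := Finset.mem_image.mp hq'
    have hp : G.Reachable p x := (Finset.mem_filter.mp hpf).2
    have hqn : ¬ G.Reachable q x := (Finset.mem_filter.mp hqf).2
    have hq : G.Reachable q y := by
      rcases tv_cover hT.isConnected (u := x) (v := y) q with h | h
      · exact absurd h hqn
      · exact h
    by_cases he : s(p, q) = s(x, y)
    · rw [Sym2.eq_iff] at he
      rcases he with ⟨rfl, rfl⟩ | ⟨rfl, rfl⟩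
      · exact le_refl _
      · exact absurd hp (fun h => hsep h.symm)
    · have hpq : p ≠ q := by
        rintro rfl
        exact hqn hp
      have hnadj : ¬ T.Adj p q := by
        intro hadj
        have hGadj : G.Adj p q := by
          rw [hG, SimpleGraph.deleteEdges_adj]
          exact ⟨hadj, by simpa using he⟩
        exact hqn (hGadj.symm.reachable.trans hp)
      have hT' := tv_exchange_isTree hT hxy hp hq hpq
      have hcost := tv_cost_exchange (Subtype.val) hxy hnadj hpq
      have hle := hmax _ hT'
      rw [hcost] at hle
      linarith
  -- apply the geometric lemma
  have hRX : ∀ w ∈ A ∪ B, dist z w ≤ R := by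
    intro w hw
    exact hR w (hU ▸ hw)
  have hzX : z ∈ convexHull ℝ {w : EuclideanSpace ℝ (Fin d) | w ∈ A ∪ B ∧ dist z w = R} := by
    have hSeq : {w : EuclideanSpace ℝ (Fin d) | w ∈ A ∪ B ∧ dist z w = R}
        = {w : EuclideanSpace ℝ (Fin d) | w ∈ X ∧ dist z w = R} := by
      ext w
      rw [Set.mem_setOf_eq, Set.mem_setOf_eq, hU]
    rw [hSeq]
    exact hz
  have hinner := tv_inner_nonpos_of_partition hu hv hRX hzX hd
  exact tv_dist_midpoint_le_of_inner_nonpos hinner
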